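/- For a domain prelocale A, the set Â of prime proper filters of A, ordered by inclusion, is a Scott domain: it has a least element (the filter generated by 1), is closed under directed unions, the principal filters of consistent primes form a basis of finite elements, and this basis is closed under bounded finite joins. -/

import Mathlib

/-- A coherent prelocale. -/
structure Prelocale (α : Type*) where
  le : α → α → Prop
  bot : α
  top : α
  sup : α → α → α
  inf : α → α → α
  le_refl : ∀ a, le a a
  le_trans : ∀ a b c, le a b → le b c → le a c
  bot_le : ∀ a, le bot a
  sup_le : ∀ a b c, le a c → le b c → le (sup a b) c
  le_sup_left : ∀ a b, le a (sup a b)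
  le_sup_right : ∀ a b, le b (sup a b)
  le_top : ∀ a, le a top
  le_inf : ∀ a b c, le a b → le a c → le a (inf b c)
  inf_le_left : ∀ a b, le (inf a b) a
  inf_le_right : ∀ a b, le (inf a b) b
  distrib : ∀ a b c, le (inf a (sup b c)) (sup (inf a b) (inf a c))

namespace Prelocale

variable {α : Type*}

def eqv (A : Prelocale α) (a b : α) : Prop := A.le a b ∧ A.le b a

def prime (A : Prelocale α) (a : α) : Prop :=
  ∀ b c, A.le a (A.sup b c) → A.le a b ∨ A.le a c

def con (A : Prelocale α) (a : α) : Prop := ¬ A.eqv a A.bot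

def joinList (A : Prelocale α) : List α → α
  | [] => A.bot
  | a :: l => A.sup a (A.joinList l)

/-- Prime proper filters of a prelocale. -/
def IsPPF (A : Prelocale α) (x : Set α) : Prop :=
  (∀ a ∈ x, A.con a) ∧
  A.top ∈ x ∧
  (∀ a b, a ∈ x → b ∈ x → A.inf a b ∈ x) ∧
  (∀ a b, a ∈ x → A.le a b → b ∈ x) ∧
  (∀ a b, A.sup a b ∈ x → a ∈ x ∨ b ∈ x)

/-- The principal filter of an element. -/
def princ (A : Prelocale α) (p : α) : Set α := {a | A.le p a}

end Prelocale

/-- A domain prelocale. -/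
structure DomainPrelocale (α : Type*) extends Prelocale α where
  d1 : ∀ a, ∃ l : List α, (∀ b ∈ l, toPrelocale.prime b) ∧
        toPrelocale.eqv a (toPrelocale.joinList l)
  d2 : toPrelocale.prime top ∧ toPrelocale.con top
  d3 : ∀ a b, toPrelocale.prime a → toPrelocale.prime b →
        toPrelocale.prime (inf a b)

open Prelocale

namespace Prelocale

variable {α : Type*}

lemma princ_ppf (A : Prelocale α) {p : α} (hp : A.prime p) (hc : A.con p) :
    IsPPF A (princ A p) := by
  refine ⟨?_, A.le_top p, ?_, ?_, ?_⟩
  · intro a ha hab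
    exact hc ⟨A.le_trans _ _ _ ha hab.1, A.bot_le p⟩
  · intro a b ha hb; exact A.le_inf _ _ _ ha hb
  · intro a b ha hab; exact A.le_trans _ _ _ ha hab
  · intro a b h; exact hp a b h

lemma le_joinList (A : Prelocale α) {a : α} : ∀ l : List α, a ∈ l → A.le a (A.joinList l)
  | b :: l, h => by
    rcases List.mem_cons.1 h with h | h
    · exact h ▸ A.le_sup_left _ _
    · exact A.le_trans _ _ _ (le_joinList A l h) (A.le_sup_right _ _)

lemma joinList_mem (A : Prelocale α) {x : Set α} (hx : IsPPF A x) :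
    ∀ l : List α, A.joinList l ∈ x → ∃ p ∈ l, p ∈ x
  | [], h => absurd ⟨A.le_refl _, A.bot_le _⟩ (hx.1 _ h)
  | a :: l, h => by
    rcases hx.2.2.2.2 _ _ h with h | h
    · exact ⟨a, List.mem_cons_self, h⟩
    · obtain ⟨p, hp, hpx⟩ := joinList_mem A hx l h
      exact ⟨p, List.mem_cons_of_mem _ hp, hpx⟩

end Prelocale

/-- For a domain prelocale `A`, the poset `Â` of prime proper filters ordered by
inclusion is a Scott domain: the filter generated by `1` is a least element;
directed unions of prime proper filters are prime proper filters; the principal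
filters of consistent primes are prime proper filters which are finite (compact)
elements and form a basis; and this basis is closed under bounded finite joins. -/
theorem ppf_scott_domain {α : Type*} (A : DomainPrelocale α) :
    -- least element: the filter generated by 1
    (IsPPF A.toPrelocale (princ A.toPrelocale A.top) ∧
      ∀ x, IsPPF A.toPrelocale x → princ A.toPrelocale A.top ⊆ x) ∧
    -- closure under directed unions
    (∀ 𝒟 : Set (Set α), 𝒟.Nonempty → DirectedOn (· ⊆ ·) 𝒟 →
      (∀ x ∈ 𝒟, IsPPF A.toPrelocale x) → IsPPF A.toPrelocale (⋃₀ 𝒟)) ∧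
    -- principal filters of consistent primes are prime proper filters and
    -- are finite (compact) elements
    (∀ p, A.toPrelocale.prime p → A.toPrelocale.con p →
      IsPPF A.toPrelocale (princ A.toPrelocale p) ∧
      (∀ 𝒟 : Set (Set α), 𝒟.Nonempty → DirectedOn (· ⊆ ·) 𝒟 →
        (∀ x ∈ 𝒟, IsPPF A.toPrelocale x) →
        princ A.toPrelocale p ⊆ ⋃₀ 𝒟 → ∃ x ∈ 𝒟, princ A.toPrelocale p ⊆ x)) ∧
    -- they form a basis: every prime proper filter is determined by the
    -- principal filters of the primes it contains
    (∀ x, IsPPF A.toPrelocale x →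
      ∀ a, a ∈ x ↔ ∃ p ∈ x, A.toPrelocale.prime p ∧ A.toPrelocale.le p a) ∧
    -- the basis is closed under bounded finite joins
    (∀ p q, A.toPrelocale.prime p → A.toPrelocale.con p →
      A.toPrelocale.prime q → A.toPrelocale.con q →
      (∃ x, IsPPF A.toPrelocale x ∧ p ∈ x ∧ q ∈ x) →
      A.toPrelocale.prime (A.inf p q) ∧ A.toPrelocale.con (A.inf p q) ∧
      IsPPF A.toPrelocale (princ A.toPrelocale (A.inf p q)) ∧
      princ A.toPrelocale p ⊆ princ A.toPrelocale (A.inf p q) ∧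
      princ A.toPrelocale q ⊆ princ A.toPrelocale (A.inf p q) ∧
      (∀ y, IsPPF A.toPrelocale y →
        princ A.toPrelocale p ⊆ y → princ A.toPrelocale q ⊆ y →
        princ A.toPrelocale (A.inf p q) ⊆ y)) := by
  set P := A.toPrelocale
  refine ⟨⟨princ_ppf P A.d2.1 A.d2.2, ?_⟩, ?_, ?_, ?_, ?_⟩
  · intro x hx a ha
    exact hx.2.2.2.1 _ _ hx.2.1 ha
  · intro 𝒟 hne hdir hppf
    obtain ⟨x0, hx0⟩ := hne
    refine ⟨?_, ?_, ?_, ?_, ?_⟩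
    · rintro a ⟨x, hx, ha⟩; exact (hppf x hx).1 a ha
    · exact ⟨x0, hx0, (hppf x0 hx0).2.1⟩
    · rintro a b ⟨x, hx, ha⟩ ⟨y, hy, hb⟩
      obtain ⟨z, hz, hxz, hyz⟩ := hdir x hx y hy
      exact ⟨z, hz, (hppf z hz).2.2.1 a b (hxz ha) (hyz hb)⟩
    · rintro a b ⟨x, hx, ha⟩ hab
      exact ⟨x, hx, (hppf x hx).2.2.2.1 a b ha hab⟩
    · rintro a b ⟨x, hx, hab⟩
      rcases (hppf x hx).2.2.2.2 a b hab with h | h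
      · exact Or.inl ⟨x, hx, h⟩
      · exact Or.inr ⟨x, hx, h⟩
  · intro p hp hc
    refine ⟨princ_ppf P hp hc, ?_⟩
    intro 𝒟 _ _ hppf hsub
    obtain ⟨x, hx, hpx⟩ := hsub (P.le_refl p)
    exact ⟨x, hx, fun a ha => (hppf x hx).2.2.2.1 p a hpx ha⟩
  · intro x hx a
    constructor
    · intro ha
      obtain ⟨l, hl, heq⟩ := A.d1 a
      obtain ⟨p, hpl, hpx⟩ := joinList_mem P hx l (hx.2.2.2.1 _ _ ha heq.1)
      exact ⟨p, hpx, hl p hpl,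
        P.le_trans _ _ _ (le_joinList P l hpl) heq.2⟩
    · rintro ⟨p, hpx, _, hpa⟩
      exact hx.2.2.2.1 p a hpx hpa
  · rintro p q hp hcp hq hcq ⟨x, hx, hpx, hqx⟩
    have hinf := hx.2.2.1 p q hpx hqx
    have hcpq : P.con (P.inf p q) := hx.1 _ hinf
    have hppq : P.prime (P.inf p q) := A.d3 p q hp hq
    refine ⟨hppq, hcpq, princ_ppf P hppq hcpq, ?_, ?_, ?_⟩
    · intro a ha; exact P.le_trans _ _ _ (P.inf_le_left p q) ha
    · intro a ha; exact P.le_trans _ _ _ (P.inf_le_right p q) ha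
    · intro y hy hpy hqy a ha
      exact hy.2.2.2.1 _ _ (hy.2.2.1 p q (hpy (P.le_refl p)) (hqy (P.le_refl q))) ha
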